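/- For every integer n ≥ 2, the complete bipartite graph K_{n,n} has the Pairing-Hamiltonian property: every perfect matching M of the complete graph on the vertex set of K_{n,n} can be extended to a Hamiltonian cycle H of that complete graph such that every edge of H not in M is an edge of K_{n,n}. -/

import Mathlib

open SimpleGraph

/-- A graph `G` has the Pairing-Hamiltonian property if every pairing `M` of `G`
(i.e. perfect matching of the complete graph on `V(G)`) extends to a Hamiltonian
cycle `H` of the complete graph all of whose edges outside `M` are edges of `G`. -/
def HasPH {V : Type} [DecidableEq V] (G : SimpleGraph V) : Prop :=
  ∀ M : (⊤ : SimpleGraph V).Subgraph, M.IsPerfectMatching →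
    ∃ (a : V) (p : (⊤ : SimpleGraph V).Walk a a), p.IsHamiltonianCycle ∧
      (∀ e ∈ M.edgeSet, e ∈ p.edges) ∧
      (∀ e ∈ p.edges, e ∉ M.edgeSet → e ∈ G.edgeSet)

namespace PHAux


set_option linter.unusedSectionVars false

variable {α : Type} [DecidableEq α]

/-- The list of edges of the closed walk through `x :: l ++ [b]`. -/
def pairsL : α → List α → α → List (Sym2 α)
  | x, [], b => [s(x, b)]
  | x, y :: l, b => s(x, y) :: pairsL y l b

/-- A walk in `⊤` through the vertices `x :: l ++ [b]`. -/
def walkTo : (x : α) → (l : List α) → (b : α) →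
    List.Chain (· ≠ ·) x (l ++ [b]) → (⊤ : SimpleGraph α).Walk x b
  | x, [], b, h =>
      Walk.cons ((top_adj x b).mpr (List.chain_cons.mp h).1) Walk.nil
  | x, y :: l, b, h =>
      Walk.cons ((top_adj x y).mpr (List.chain_cons.mp h).1)
        (walkTo y l b (List.chain_cons.mp h).2)

lemma support_walkTo : ∀ (x : α) (l : List α) (b : α) (h : _),
    (walkTo x l b h).support = x :: (l ++ [b])
  | x, [], b, h => by simp [walkTo]
  | x, y :: l, b, h => by simp [walkTo]; exact support_walkTo y l b _

lemma edges_walkTo : ∀ (x : α) (l : List α) (b : α) (h : _),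
    (walkTo x l b h).edges = pairsL x l b
  | x, [], b, h => by simp [walkTo, pairsL]
  | x, y :: l, b, h => by simp [walkTo, pairsL]; exact edges_walkTo y l b _

lemma chain_ne_aux : ∀ (l : List α) (a z : α), (a :: l).Nodup → z ∉ l →
    (l = [] → a ≠ z) → List.Chain (· ≠ ·) a (l ++ [z])
  | [], a, z, _, _, h3 => List.Chain.cons (h3 rfl) List.Chain.nil
  | b :: l, a, z, hnd, hz, _ => by
      rcases List.nodup_cons.mp hnd with ⟨ha, hnd'⟩
      refine List.Chain.cons (fun h => ha (h ▸ List.mem_cons_self)) ?_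
      exact chain_ne_aux l b z hnd' (fun h => hz (List.mem_cons_of_mem _ h))
        (fun _ => fun h => hz (h ▸ List.mem_cons_self))

lemma notmem_pairsL : ∀ (l : List α) (z b y a : α), y ∉ z :: l → y ≠ b →
    s(a, y) ∉ pairsL z l b
  | [], z, b, y, a, hy, hyb => by
      simp only [pairsL, List.mem_singleton, Sym2.eq_iff]
      rintro (⟨rfl, rfl⟩ | ⟨rfl, rfl⟩)
      · exact hyb rfl
      · exact hy (List.mem_cons_self)
  | w :: l, z, b, y, a, hy, hyb => by
      simp only [pairsL, List.mem_cons, Sym2.eq_iff]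
      rintro ((⟨rfl, rfl⟩ | ⟨rfl, rfl⟩) | h)
      · exact hy (List.mem_cons_of_mem _ (List.mem_cons_self))
      · exact hy (List.mem_cons_self)
      · exact notmem_pairsL l w b y a
          (fun hmem => hy (List.mem_cons_of_mem _ hmem)) hyb h

/-- The closing edge `s(a, y)` does not appear in the path `y :: l ++ [b]`. -/
lemma edge_head_notmem (l : List α) (y b a : α) (hl : l ≠ []) (hay : a ≠ y)
    (hal : a ∉ l) (hyl : y ∉ l) (hyb : y ≠ b) : s(a, y) ∉ pairsL y l b := by
  rcases l with _ | ⟨z, l'⟩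
  · exact absurd rfl hl
  · simp only [pairsL, List.mem_cons, Sym2.eq_iff]
    rintro ((⟨rfl, rfl⟩ | ⟨rfl, -⟩) | h)
    · exact hay rfl
    · exact hal (List.mem_cons_self)
    · exact notmem_pairsL l' z b y a hyl hyb h

lemma mem_pairsL_flatMap (f : α → α) :
    ∀ (E : List α) (y b x : α), x ∈ E →
      s(x, f x) ∈ pairsL y (E.flatMap fun z => [z, f z]) b
  | [], y, b, x, hx => by simp at hx
  | z :: E, y, b, x, hx => by
      simp only [List.flatMap_cons, List.cons_append, pairsL, List.mem_cons]
      rcases List.mem_cons.mp hx with rfl | hx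
      · right; left; rfl
      · right; right; exact mem_pairsL_flatMap f E (f z) b x hx

/-- Alternation property along the representative list. -/
def altOK (f : α → α) (R : α → α → Prop) : α → List α → α → Prop
  | y, [], b => R y b
  | y, x :: E, b => R y x ∧ altOK f R (f x) E b

lemma pairsL_classify (f : α → α) (R : α → α → Prop) :
    ∀ (E : List α) (y b : α), altOK f R y E b →
      ∀ e ∈ pairsL y (E.flatMap fun x => [x, f x]) b,
        (∃ x ∈ E, e = s(x, f x)) ∨ ∃ u v, e = s(u, v) ∧ R u v
  | [], y, b, hOK, e, he => by
      simp only [List.flatMap_nil, pairsL, List.mem_singleton] at he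
      exact Or.inr ⟨y, b, he, hOK⟩
  | x :: E, y, b, hOK, e, he => by
      simp only [List.flatMap_cons, List.cons_append, pairsL, List.mem_cons] at he
      rcases he with rfl | (rfl | he)
      · exact Or.inr ⟨y, x, rfl, hOK.1⟩
      · exact Or.inl ⟨x, List.mem_cons_self, rfl⟩
      · rcases pairsL_classify f R E (f x) b hOK.2 e he with ⟨z, hz, hez⟩ | h
        · exact Or.inl ⟨z, List.mem_cons_of_mem _ hz, hez⟩
        · exact Or.inr h

lemma altOK_C (f : α → α) (sd : α → Bool) :
    ∀ (lc : List α) (y b : α), sd y = true → sd b = false →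
      (∀ x ∈ lc, sd x = false ∧ sd (f x) = true) →
      altOK f (fun u v => sd u ≠ sd v) y lc b
  | [], y, b, hy, hb, _ => by simp [altOK, hy, hb]
  | c :: lc, y, b, hy, hb, hc => by
      refine ⟨?_, altOK_C f sd lc (f c) b (hc c (List.mem_cons_self)).2 hb
        fun x hx => hc x (List.mem_cons_of_mem _ hx)⟩
      simp [hy, (hc c (List.mem_cons_self)).1]

lemma altOK_mid (f : α → α) (sd : α → Bool) :
    ∀ (la lb lc : List α) (y b : α), la.length = lb.length →
      sd y = true → sd b = false →
      (∀ x ∈ la, sd x = false ∧ sd (f x) = false) →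
      (∀ x ∈ lb, sd x = true ∧ sd (f x) = true) →
      (∀ x ∈ lc, sd x = false ∧ sd (f x) = true) →
      altOK f (fun u v => sd u ≠ sd v) y
        (((la.zip lb).flatMap fun p => [p.1, p.2]) ++ lc) b
  | [], [], lc, y, b, _, hy, hb, _, _, hc => by
      simpa using altOK_C f sd lc y b hy hb hc
  | [], b0 :: lb, _, _, _, h, _, _, _, _, _ => by simp at h
  | a0 :: la, [], _, _, _, h, _, _, _, _, _ => by simp at h
  | a0 :: la, b0 :: lb, lc, y, b, hlen, hy, hb, hA, hB, hC => by
      have ha0 := hA a0 (List.mem_cons_self)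
      have hb0 := hB b0 (List.mem_cons_self)
      refine ⟨by simp [hy, ha0.1], by simp [ha0.2, hb0.1], ?_⟩
      exact altOK_mid f sd la lb lc (f b0) b (by simpa using hlen) hb0.2 hb
        (fun x hx => hA x (List.mem_cons_of_mem _ hx))
        (fun x hx => hB x (List.mem_cons_of_mem _ hx)) hC

lemma zip_flatMap_perm : ∀ (la lb : List α), la.length = lb.length →
    List.Perm ((la.zip lb).flatMap fun p => [p.1, p.2]) (la ++ lb)
  | [], [], _ => by simp
  | [], b :: lb, h => by simp at h
  | a :: la, [], h => by simp at h
  | a :: la, b :: lb, h => by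
      simp only [List.zip_cons_cons, List.flatMap_cons, List.cons_append]
      refine List.Perm.cons a ?_
      have := (zip_flatMap_perm la lb (by simpa using h)).cons b
      exact this.trans List.perm_middle.symm

lemma flatMap_pair_perm (f : α → α) :
    ∀ d : List α, List.Perm (d.flatMap fun x => [x, f x]) (d ++ d.map f)
  | [] => by simp
  | x :: d => by
      simp only [List.flatMap_cons, List.cons_append, List.map_cons]
      refine List.Perm.cons x ?_
      have := (flatMap_pair_perm f d).cons (f x)
      exact this.trans List.perm_middle.symm


end PHAux

set_option maxHeartbeats 1000000 in
open PHAux in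
/-- For every `n ≥ 2`, the complete bipartite graph `K_{n,n}` has the
Pairing-Hamiltonian property. -/
theorem completeBipartite_hasPH (n : ℕ) (hn : 2 ≤ n) :
    HasPH (completeBipartiteGraph (Fin n) (Fin n)) := by
  classical
  intro M hM
  have pm := Subgraph.isPerfectMatching_iff.mp hM
  let f : (Fin n ⊕ Fin n) → (Fin n ⊕ Fin n) := fun v => (pm v).choose
  have hfadj : ∀ v, M.Adj v (f v) := fun v => (pm v).choose_spec.1
  have huniq : ∀ v w, M.Adj v w → w = f v := fun v w h => (pm v).choose_spec.2 w h
  have hinv : ∀ v, f (f v) = v := fun v => (huniq (f v) v (hfadj v).symm).symm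
  have finj : Function.Injective f := Function.Involutive.injective hinv
  have hne : ∀ v, f v ≠ v := by
    intro v h
    have h2 := hfadj v
    rw [h] at h2
    exact (M.adj_sub h2).ne rfl
  let toN : (Fin n ⊕ Fin n) → ℕ := Sum.elim (fun i : Fin n => (i : ℕ)) (fun j : Fin n => n + (j : ℕ))
  have toN_inj : ∀ u v : Fin n ⊕ Fin n, toN u = toN v → u = v := by
    rintro (i | i) (j | j) h <;> simp only [toN, Sum.elim_inl, Sum.elim_inr] at h
    · exact congrArg Sum.inl (Fin.ext h)
    · exact absurd h (by have := i.isLt; omega)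
    · exact absurd h (by have := j.isLt; omega)
    · exact congrArg Sum.inr (Fin.ext (by omega))
  let sd : (Fin n ⊕ Fin n) → Bool := Sum.isRight
  let A : Finset (Fin n ⊕ Fin n) := Finset.univ.filter
    (fun x => sd x = false ∧ sd (f x) = false ∧ toN x < toN (f x))
  let A' : Finset (Fin n ⊕ Fin n) := Finset.univ.filter
    (fun x => sd x = false ∧ sd (f x) = false ∧ toN (f x) < toN x)
  let B : Finset (Fin n ⊕ Fin n) := Finset.univ.filter
    (fun x => sd x = true ∧ sd (f x) = true ∧ toN x < toN (f x))
  let B' : Finset (Fin n ⊕ Fin n) := Finset.univ.filter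
    (fun x => sd x = true ∧ sd (f x) = true ∧ toN (f x) < toN x)
  let C : Finset (Fin n ⊕ Fin n) := Finset.univ.filter (fun x => sd x = false ∧ sd (f x) = true)
  let C' : Finset (Fin n ⊕ Fin n) := Finset.univ.filter (fun x => sd x = true ∧ sd (f x) = false)
  have htoNne : ∀ v : Fin n ⊕ Fin n, toN v ≠ toN (f v) := fun v h => hne v (toN_inj _ _ h.symm)
  have hLcard : (Finset.univ.filter (fun x : Fin n ⊕ Fin n => sd x = false)).card = n := by
    have he : (Finset.univ.filter (fun x : Fin n ⊕ Fin n => sd x = false))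
        = Finset.univ.map ⟨Sum.inl, Sum.inl_injective⟩ := by
      ext x
      rcases x with i | i <;> simp [sd]
    rw [he, Finset.card_map, Finset.card_univ, Fintype.card_fin]
  have hRcard : (Finset.univ.filter (fun x : Fin n ⊕ Fin n => sd x = true)).card = n := by
    have he : (Finset.univ.filter (fun x : Fin n ⊕ Fin n => sd x = true))
        = Finset.univ.map ⟨Sum.inr, Sum.inr_injective⟩ := by
      ext x
      rcases x with i | i <;> simp [sd]
    rw [he, Finset.card_map, Finset.card_univ, Fintype.card_fin]
  have hLsplit : Finset.univ.filter (fun x : Fin n ⊕ Fin n => sd x = false)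
      = (A ∪ A') ∪ C := by
    ext x
    simp only [A, A', C, Finset.mem_filter, Finset.mem_union, Finset.mem_univ, true_and]
    constructor
    · intro hx
      cases h2 : sd (f x)
      · rcases lt_trichotomy (toN x) (toN (f x)) with h | h | h
        · exact Or.inl (Or.inl ⟨hx, rfl, h⟩)
        · exact absurd h (htoNne x)
        · exact Or.inl (Or.inr ⟨hx, rfl, h⟩)
      · exact Or.inr ⟨hx, rfl⟩
    · rintro ((⟨h, -, -⟩ | ⟨h, -, -⟩) | ⟨h, -⟩) <;> exact h
  have hRsplit : Finset.univ.filter (fun x : Fin n ⊕ Fin n => sd x = true)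
      = (B ∪ B') ∪ C' := by
    ext x
    simp only [B, B', C', Finset.mem_filter, Finset.mem_union, Finset.mem_univ, true_and]
    constructor
    · intro hx
      cases h2 : sd (f x)
      · exact Or.inr ⟨hx, rfl⟩
      · rcases lt_trichotomy (toN x) (toN (f x)) with h | h | h
        · exact Or.inl (Or.inl ⟨hx, rfl, h⟩)
        · exact absurd h (htoNne x)
        · exact Or.inl (Or.inr ⟨hx, rfl, h⟩)
    · rintro ((⟨h, -, -⟩ | ⟨h, -, -⟩) | ⟨h, -⟩) <;> exact h
  have hdAA' : Disjoint A A' := by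
    rw [Finset.disjoint_left]
    intro x hx hx'
    simp only [A, A', Finset.mem_filter, Finset.mem_univ, true_and] at hx hx'
    omega
  have hdBB' : Disjoint B B' := by
    rw [Finset.disjoint_left]
    intro x hx hx'
    simp only [B, B', Finset.mem_filter, Finset.mem_univ, true_and] at hx hx'
    omega
  have hdAC : Disjoint (A ∪ A') C := by
    rw [Finset.disjoint_left]
    intro x hx hx'
    simp only [A, A', C, Finset.mem_filter, Finset.mem_univ, true_and,
      Finset.mem_union] at hx hx'
    rcases hx with ⟨-, h, -⟩ | ⟨-, h, -⟩ <;> simp [h] at hx'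
  have hdBC' : Disjoint (B ∪ B') C' := by
    rw [Finset.disjoint_left]
    intro x hx hx'
    simp only [B, B', C', Finset.mem_filter, Finset.mem_univ, true_and,
      Finset.mem_union] at hx hx'
    rcases hx with ⟨-, h, -⟩ | ⟨-, h, -⟩ <;> simp [h] at hx'
  have hA'card : A'.card = A.card := by
    have himg : A' = A.image f := by
      ext x
      simp only [A, A', Finset.mem_filter, Finset.mem_univ, true_and, Finset.mem_image]
      constructor
      · rintro ⟨h1, h2, h3⟩
        refine ⟨f x, ?_, hinv x⟩
        simp only [hinv]
        exact ⟨h2, h1, h3⟩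
      · rintro ⟨y, ⟨hy1, hy2, hy3⟩, rfl⟩
        simp only [hinv]
        exact ⟨hy2, hy1, hy3⟩
    rw [himg, Finset.card_image_of_injective _ finj]
  have hB'card : B'.card = B.card := by
    have himg : B' = B.image f := by
      ext x
      simp only [B, B', Finset.mem_filter, Finset.mem_univ, true_and, Finset.mem_image]
      constructor
      · rintro ⟨h1, h2, h3⟩
        refine ⟨f x, ?_, hinv x⟩
        simp only [hinv]
        exact ⟨h2, h1, h3⟩
      · rintro ⟨y, ⟨hy1, hy2, hy3⟩, rfl⟩
        simp only [hinv]
        exact ⟨hy2, hy1, hy3⟩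
    rw [himg, Finset.card_image_of_injective _ finj]
  have hC'card : C'.card = C.card := by
    have himg : C' = C.image f := by
      ext x
      simp only [C, C', Finset.mem_filter, Finset.mem_univ, true_and, Finset.mem_image]
      constructor
      · rintro ⟨h1, h2⟩
        refine ⟨f x, ?_, hinv x⟩
        simp only [hinv]
        exact ⟨h2, h1⟩
      · rintro ⟨y, ⟨hy1, hy2⟩, rfl⟩
        simp only [hinv]
        exact ⟨hy2, hy1⟩
    rw [himg, Finset.card_image_of_injective _ finj]
  have hcardL : A.card + A'.card + C.card = n := by
    rw [hLsplit, Finset.card_union_of_disjoint hdAC,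
      Finset.card_union_of_disjoint hdAA'] at hLcard
    exact hLcard
  have hcardR : B.card + B'.card + C'.card = n := by
    rw [hRsplit, Finset.card_union_of_disjoint hdBC',
      Finset.card_union_of_disjoint hdBB'] at hRcard
    exact hRcard
  have hABcard : A.card = B.card := by omega
  have hAprop : ∀ x ∈ A, sd x = false ∧ sd (f x) = false := by
    intro x hx
    simp only [A, Finset.mem_filter, Finset.mem_univ, true_and] at hx
    exact ⟨hx.1, hx.2.1⟩
  have hBprop : ∀ x ∈ B, sd x = true ∧ sd (f x) = true := by
    intro x hx
    simp only [B, Finset.mem_filter, Finset.mem_univ, true_and] at hx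
    exact ⟨hx.1, hx.2.1⟩
  have hCprop : ∀ x ∈ C, sd x = false ∧ sd (f x) = true := by
    intro x hx
    simp only [C, Finset.mem_filter, Finset.mem_univ, true_and] at hx
    exact hx
  have hAmk : ∀ x : Fin n ⊕ Fin n, sd x = false → sd (f x) = false →
      toN x < toN (f x) → x ∈ A := by
    intro x h1 h2 h3
    simp only [A, Finset.mem_filter, Finset.mem_univ, true_and]
    exact ⟨h1, h2, h3⟩
  have hBmk : ∀ x : Fin n ⊕ Fin n, sd x = true → sd (f x) = true →
      toN x < toN (f x) → x ∈ B := by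
    intro x h1 h2 h3
    simp only [B, Finset.mem_filter, Finset.mem_univ, true_and]
    exact ⟨h1, h2, h3⟩
  have hCmk : ∀ x : Fin n ⊕ Fin n, sd x = false → sd (f x) = true → x ∈ C := by
    intro x h1 h2
    simp only [C, Finset.mem_filter, Finset.mem_univ, true_and]
    exact ⟨h1, h2⟩
  set la := A.toList with hla_def
  set lb := B.toList with hlb_def
  set lc := C.toList with hlc_def
  have hlen : la.length = lb.length := by
    rw [hla_def, hlb_def, Finset.length_toList, Finset.length_toList]
    exact hABcard
  set E : List (Fin n ⊕ Fin n) := ((la.zip lb).flatMap fun p => [p.1, p.2]) ++ lc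
    with hE_def
  have hE_perm : List.Perm E ((la ++ lb) ++ lc) :=
    (zip_flatMap_perm la lb hlen).append_right lc
  have hmemD : ∀ x : Fin n ⊕ Fin n,
      (x ∈ (la ++ lb) ++ lc) ↔ (x ∈ A ∨ x ∈ B ∨ x ∈ C) := by
    intro x
    simp only [List.mem_append, or_assoc, hla_def, hlb_def, hlc_def, Finset.mem_toList]
  have hD_nodup : ((la ++ lb) ++ lc).Nodup := by
    rw [List.nodup_append, List.nodup_append]
    refine ⟨⟨A.nodup_toList, B.nodup_toList, ?_⟩, C.nodup_toList, ?_⟩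
    · intro x hx _ hx' rfl
      rw [hla_def, Finset.mem_toList] at hx
      rw [hlb_def, Finset.mem_toList] at hx'
      exact Bool.noConfusion (((hAprop x hx).1).symm.trans (hBprop x hx').1)
    · intro x hx _ hx' rfl
      rw [hlc_def, Finset.mem_toList] at hx'
      have h2 := (hCprop x hx').2
      rcases List.mem_append.mp hx with h | h
      · rw [hla_def, Finset.mem_toList] at h
        exact Bool.noConfusion (((hAprop x h).2).symm.trans h2)
      · rw [hlb_def, Finset.mem_toList] at h
        exact Bool.noConfusion (((hCprop x hx').1).symm.trans (hBprop x h).1)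
  have hE_nodup : E.Nodup := hE_perm.nodup_iff.mpr hD_nodup
  have hDnotf : ∀ x : Fin n ⊕ Fin n, (x ∈ A ∨ x ∈ B ∨ x ∈ C) →
      ¬(f x ∈ A ∨ f x ∈ B ∨ f x ∈ C) := by
    intro x hx hfx
    have P : ∀ y : Fin n ⊕ Fin n, (y ∈ A ∨ y ∈ B ∨ y ∈ C) →
        (sd y = false ∧ sd (f y) = false ∧ toN y < toN (f y)) ∨
        (sd y = true ∧ sd (f y) = true ∧ toN y < toN (f y)) ∨
        (sd y = false ∧ sd (f y) = true) := by
      rintro y (h | h | h)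
      · left
        simpa only [A, Finset.mem_filter, Finset.mem_univ, true_and] using h
      · right; left
        simpa only [B, Finset.mem_filter, Finset.mem_univ, true_and] using h
      · right; right
        simpa only [C, Finset.mem_filter, Finset.mem_univ, true_and] using h
    have h1 := P x hx
    have h2 := P (f x) hfx
    simp only [hinv] at h2
    rcases h1 with ⟨a1, a2, a3⟩ | ⟨a1, a2, a3⟩ | ⟨a1, a2⟩ <;>
      rcases h2 with ⟨b1, b2, b3⟩ | ⟨b1, b2, b3⟩ | ⟨b1, b2⟩
    · omega
    · exact Bool.noConfusion (a2.symm.trans b1)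
    · exact Bool.noConfusion (a1.symm.trans b2)
    · exact Bool.noConfusion (b1.symm.trans a2)
    · omega
    · exact Bool.noConfusion (b1.symm.trans a2)
    · exact Bool.noConfusion (a2.symm.trans b1)
    · exact Bool.noConfusion (a1.symm.trans b2)
    · exact Bool.noConfusion (a2.symm.trans b1)
  have hl_perm : List.Perm (E.flatMap fun x => [x, f x])
      (((la ++ lb) ++ lc) ++ ((la ++ lb) ++ lc).map f) :=
    (hE_perm.flatMap_right _).trans (flatMap_pair_perm f _)
  have hl_nodup : (E.flatMap fun x => [x, f x]).Nodup := by
    rw [hl_perm.nodup_iff, List.nodup_append]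
    refine ⟨hD_nodup, hD_nodup.map finj, ?_⟩
    intro x hx _ hx' rfl
    obtain ⟨y, hy, hfy⟩ := List.mem_map.mp hx'
    have hyx : y = f x := by rw [← hfy, hinv]
    exact hDnotf x ((hmemD x).mp hx) ((hmemD (f x)).mp (hyx ▸ hy))
  have hl_mem : ∀ v, v ∈ E.flatMap fun x => [x, f x] := by
    intro v
    rw [hl_perm.mem_iff, List.mem_append]
    have hDof : ∀ w, (w ∈ A ∨ w ∈ B ∨ w ∈ C) → w ∈ (la ++ lb) ++ lc :=
      fun w h => (hmemD w).mpr h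
    have hmapof : ∀ w : Fin n ⊕ Fin n, (f w ∈ A ∨ f w ∈ B ∨ f w ∈ C) →
        w ∈ ((la ++ lb) ++ lc).map f :=
      fun w h => List.mem_map.mpr ⟨f w, hDof _ h, hinv w⟩
    cases hv : sd v <;> cases hfv : sd (f v)
    · rcases lt_trichotomy (toN v) (toN (f v)) with h | h | h
      · exact Or.inl (hDof v (Or.inl (hAmk v hv hfv h)))
      · exact absurd h (htoNne v)
      · refine Or.inr (hmapof v (Or.inl (hAmk (f v) hfv ?_ ?_))) <;>
          simp only [hinv]
        · exact hv
        · exact h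
    · exact Or.inl (hDof v (Or.inr (Or.inr (hCmk v hv hfv))))
    · refine Or.inr (hmapof v (Or.inr (Or.inr (hCmk (f v) hfv ?_))))
      simp only [hinv]
      exact hv
    · rcases lt_trichotomy (toN v) (toN (f v)) with h | h | h
      · exact Or.inl (hDof v (Or.inr (Or.inl (hBmk v hv hfv h))))
      · exact absurd h (htoNne v)
      · refine Or.inr (hmapof v (Or.inr (Or.inl (hBmk (f v) hfv ?_ ?_)))) <;>
          simp only [hinv]
        · exact hv
        · exact h
  have hE_len : E.length = n := by
    rw [hE_perm.length_eq]
    simp only [List.length_append, hla_def, hlb_def, hlc_def, Finset.length_toList]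
    omega
  obtain ⟨x1, E'', hEeq, hE''ne, haltOK⟩ :
      ∃ x1 E'', E = x1 :: E'' ∧ E'' ≠ [] ∧
        altOK f (fun u v => sd u ≠ sd v) (f x1) E'' x1 := by
    rcases hla : la with _ | ⟨a0, la'⟩
    · have hlb0 : lb = [] := List.length_eq_zero_iff.mp (by rw [← hlen, hla]; rfl)
      have hElc : E = lc := by rw [hE_def, hla, hlb0]; rfl
      have hlc_len : lc.length = n := by rw [← hElc]; exact hE_len
      rcases hlc : lc with _ | ⟨c0, lc'⟩
      · rw [hlc] at hlc_len
        simp at hlc_len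
        omega
      · have hc0 : c0 ∈ C := by
          have : c0 ∈ lc := by rw [hlc]; exact List.mem_cons_self
          rwa [hlc_def, Finset.mem_toList] at this
        refine ⟨c0, lc', by rw [hElc, hlc], ?_, ?_⟩
        · intro h
          rw [hlc, h] at hlc_len
          simp at hlc_len
          omega
        · refine altOK_C f sd lc' (f c0) c0 (hCprop c0 hc0).2 (hCprop c0 hc0).1 ?_
          intro x hx
          have : x ∈ lc := by rw [hlc]; exact List.mem_cons_of_mem _ hx
          rw [hlc_def, Finset.mem_toList] at this
          exact hCprop x this
    · rcases hlb2 : lb with _ | ⟨b0, lb'⟩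
      · exfalso
        rw [hla, hlb2] at hlen
        simp at hlen
      · have ha0 : a0 ∈ A := by
          have : a0 ∈ la := by rw [hla]; exact List.mem_cons_self
          rwa [hla_def, Finset.mem_toList] at this
        have hb0 : b0 ∈ B := by
          have : b0 ∈ lb := by rw [hlb2]; exact List.mem_cons_self
          rwa [hlb_def, Finset.mem_toList] at this
        refine ⟨a0, b0 :: (((la'.zip lb').flatMap fun p => [p.1, p.2]) ++ lc),
          by rw [hE_def, hla, hlb2]; rfl, by simp, ?_, ?_⟩
        · show sd (f a0) ≠ sd b0
          rw [(hAprop _ ha0).2, (hBprop _ hb0).1]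
          simp
        · refine altOK_mid f sd la' lb' lc (f b0) a0 ?_
            (hBprop _ hb0).2 (hAprop _ ha0).1 ?_ ?_ ?_
          · have := hlen
            rw [hla, hlb2] at this
            simpa using this
          · intro x hx
            have : x ∈ la := by rw [hla]; exact List.mem_cons_of_mem _ hx
            rw [hla_def, Finset.mem_toList] at this
            exact hAprop x this
          · intro x hx
            have : x ∈ lb := by rw [hlb2]; exact List.mem_cons_of_mem _ hx
            rw [hlb_def, Finset.mem_toList] at this
            exact hBprop x this
          · intro x hx
            rw [hlc_def, Finset.mem_toList] at hx
            exact hCprop x hx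
  set T := E''.flatMap (fun x => [x, f x]) with hT_def
  have hleq : (E.flatMap fun x => [x, f x]) = x1 :: f x1 :: T := by
    rw [hEeq, hT_def]
    rfl
  have hnodup2 : (x1 :: f x1 :: T).Nodup := by rw [← hleq]; exact hl_nodup
  have hl2 : ∀ v, v ∈ x1 :: f x1 :: T := by
    intro v
    have := hl_mem v
    rwa [hleq] at this
  have hT_ne : T ≠ [] := by
    rcases hE3 : E'' with _ | ⟨z, E3⟩
    · exact absurd hE3 hE''ne
    · rw [hT_def, hE3]
      simp
  have hx1_notin : x1 ∉ f x1 :: T := (List.nodup_cons.mp hnodup2).1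
  have hrest_nodup : (f x1 :: T).Nodup := (List.nodup_cons.mp hnodup2).2
  have hfx1_notin : f x1 ∉ T := (List.nodup_cons.mp hrest_nodup).1
  have hT_nodup : T.Nodup := (List.nodup_cons.mp hrest_nodup).2
  have hx1T : x1 ∉ T := fun h => hx1_notin (List.mem_cons_of_mem _ h)
  have hchain : List.Chain (· ≠ ·) x1 ((f x1 :: T) ++ [x1]) :=
    chain_ne_aux (f x1 :: T) x1 x1 hnodup2 hx1_notin (by intro h; simp at h)
  have hpairs : pairsL x1 (f x1 :: T) x1 = s(x1, f x1) :: pairsL (f x1) T x1 := rfl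
  have hkey : ∀ x ∈ E, s(x, f x) ∈ s(x1, f x1) :: pairsL (f x1) T x1 := by
    intro x hx
    rw [hEeq] at hx
    rcases List.mem_cons.mp hx with rfl | hx'
    · exact List.mem_cons_self
    · refine List.mem_cons_of_mem _ ?_
      rw [hT_def]
      exact mem_pairsL_flatMap f E'' (f x1) x1 x hx'
  refine ⟨x1, walkTo x1 (f x1 :: T) x1 hchain, ?_, ?_, ?_⟩
  · rw [Walk.isHamiltonianCycle_iff_isCycle_and_support_count_tail_eq_one]
    constructor
    · rw [walkTo]
      rw [Walk.cons_isCycle_iff]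
      constructor
      · apply Walk.IsPath.mk'
        refine (congrArg List.Nodup (support_walkTo (f x1) T x1 _)).mpr ?_
        rw [List.nodup_cons]
        constructor
        · intro h
          rcases List.mem_append.mp h with h | h
          · exact hfx1_notin h
          · exact hne x1 (List.mem_singleton.mp h)
        · rw [List.nodup_append]
          exact ⟨hT_nodup, List.nodup_singleton _,
            fun y hy _ hy' h => by subst h; exact hx1T ((List.mem_singleton.mp hy') ▸ hy)⟩
      · refine (congrArg (s(x1, f x1) ∉ ·) (edges_walkTo (f x1) T x1 _)).mpr ?_
        exact edge_head_notmem T (f x1) x1 x1 hT_ne (fun h => hne x1 h.symm)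
          hx1T hfx1_notin (hne x1)
    · intro a
      rw [support_walkTo]
      simp only [List.tail_cons]
      rw [@List.Perm.count_eq _ instBEqOfDecidableEq _ _ (List.perm_append_singleton _ _)]
      exact @List.count_eq_one_of_mem _ instBEqOfDecidableEq _ _ _ hnodup2 (hl2 a)
  · intro e he
    induction e using Sym2.ind with
    | _ u v =>
      have hadj : M.Adj u v := Subgraph.mem_edgeSet.mp he
      have hv : v = f u := huniq u v hadj
      subst hv
      obtain ⟨x, hxE, hux⟩ := List.mem_flatMap.mp (hl_mem u)
      simp only [List.mem_cons, List.not_mem_nil, or_false] at hux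
      rw [edges_walkTo, hpairs]
      rcases hux with h | h
      · rw [h]
        exact hkey x hxE
      · rw [h]
        have heq : s(f x, f (f x)) = s(x, f x) := by
          simp only [hinv]
          exact Sym2.eq_swap
        rw [heq]
        exact hkey x hxE
  · intro e he hem
    rw [edges_walkTo, hpairs] at he
    rcases List.mem_cons.mp he with rfl | he'
    · exact absurd (Subgraph.mem_edgeSet.mpr (hfadj x1)) hem
    · rw [hT_def] at he'
      rcases pairsL_classify f _ E'' (f x1) x1 haltOK e he' with ⟨x, hx, rfl⟩ | ⟨u, v, rfl, hR⟩
      · exact absurd (Subgraph.mem_edgeSet.mpr (hfadj x)) hem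
      · rw [mem_edgeSet]
        rcases u with ui | ui <;> rcases v with vi | vi <;>
          simp [sd, completeBipartiteGraph] at hR ⊢
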